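/- arXiv:2304.01652 — 2 statements merged into one kernel-verified Lean document; each statement's English description precedes it below -/
import Mathlib

section
/- Under the setup of the symbolic model with cells of centers c_{x̂} and quantization η, B L-Lipschitz, Ŝ = {x̂ | B(c_{x̂}) - L·η_max/2 ≥ 0}: if for every x̂ ∈ Ŝ there exists an admissible input û such that min_{x̂' ∈ F̂(x̂,û)} [B(c_{x̂'}) - B(c_{x̂})] ≥ -α(B(c_{x̂}) - L·η_max/2), where α is 𝒦∞ with α(r) < r for r > 0, then Ŝ is controlled invariant for the transition system F̂: for every x̂ ∈ Ŝ there is û with F̂(x̂,û) ⊆ Ŝ. -/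
/-- the symbolic barrier condition implies controlled invariance of
the symbolic safe set for the symbolic transition system. -/
theorem stmt4 {n : ℕ} {Xh Uh : Type*}
    (Fh : Xh → Uh → Set Xh)
    (c : Xh → (Fin n → ℝ)) (B : (Fin n → ℝ) → ℝ)
    (L : ℝ) (ηmax : ℝ) (hηmax : 0 < ηmax)
    (α : ℝ → ℝ)
    (hα_cont : Continuous α) (hα_mono : StrictMonoOn α (Set.Ici 0))
    (hα0 : α 0 = 0) (hα_nonneg : ∀ r ≥ (0:ℝ), α r ≥ 0)
    (hα_unbounded : Filter.Tendsto α Filter.atTop Filter.atTop)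
    (hα_lt : ∀ r > (0:ℝ), α r < r)
    (Sh : Set Xh) (hSh : Sh = {xh : Xh | B (c xh) - L * ηmax / 2 ≥ 0})
    (hbarrier : ∀ xh ∈ Sh, ∃ uh : Uh, (Fh xh uh).Nonempty ∧
      ∀ xh' ∈ Fh xh uh, B (c xh') - B (c xh) ≥ -α (B (c xh) - L * ηmax / 2)) :
    ∀ xh ∈ Sh, ∃ uh : Uh, Fh xh uh ⊆ Sh := by
  intro xh hxh
  obtain ⟨uh, _, h2⟩ := hbarrier xh hxh
  refine ⟨uh, fun xh' hx' => ?_⟩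
  rw [hSh] at hxh ⊢
  have hr : B (c xh) - L * ηmax / 2 ≥ 0 := hxh
  have hαle : α (B (c xh) - L * ηmax / 2) ≤ B (c xh) - L * ηmax / 2 := by
    rcases eq_or_lt_of_le hr with h | h
    · rw [← h, hα0]
    · exact le_of_lt (hα_lt _ h)
  have := h2 xh' hx'
  show B (c xh') - L * ηmax / 2 ≥ 0
  linarith
end

section
/- Given two relations Q₁ ⊆ X₁ × X̂₁ and Q₂ ⊆ X₂ × X̂₂ that are feedback refinement relations from transition systems Σ₁ to Σ̂₁ and Σ₂ to Σ̂₂ respectively, the product relation Q = {((x₁,x₂),(x̂₁,x̂₂)) | (x₁,x̂₁) ∈ Q₁, (x₂,x̂₂) ∈ Q₂} is a feedback refinement relation from the product transition system Σ₁ × Σ₂ to Σ̂₁ × Σ̂₂. -/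
/-- A feedback refinement relation from the transition system `(X,U,F)` to the
transition system `(Xh,U,Fh)`. -/
def IsFRR {X Xh U : Type*} (F : X → U → Set X) (Fh : Xh → U → Set Xh)
    (Q : X → Xh → Prop) : Prop :=
  (∀ x, ∃ xh, Q x xh) ∧
  ∀ x xh, Q x xh →
    ((∀ u, (Fh xh u).Nonempty → (F x u).Nonempty) ∧
     (∀ u, (Fh xh u).Nonempty →
       ∀ x' ∈ F x u, ∀ xh', Q x' xh' → xh' ∈ Fh xh u))

/-- the product of two feedback refinement relations is a feedback
refinement relation between the product transition systems. -/
theorem stmt6 {X₁ Xh₁ U₁ X₂ Xh₂ U₂ : Type*}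
    (F₁ : X₁ → U₁ → Set X₁) (Fh₁ : Xh₁ → U₁ → Set Xh₁) (Q₁ : X₁ → Xh₁ → Prop)
    (F₂ : X₂ → U₂ → Set X₂) (Fh₂ : Xh₂ → U₂ → Set Xh₂) (Q₂ : X₂ → Xh₂ → Prop)
    (h₁ : IsFRR F₁ Fh₁ Q₁) (h₂ : IsFRR F₂ Fh₂ Q₂) :
    IsFRR (fun (x : X₁ × X₂) (u : U₁ × U₂) => F₁ x.1 u.1 ×ˢ F₂ x.2 u.2)
          (fun (xh : Xh₁ × Xh₂) (u : U₁ × U₂) => Fh₁ xh.1 u.1 ×ˢ Fh₂ xh.2 u.2)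
          (fun x xh => Q₁ x.1 xh.1 ∧ Q₂ x.2 xh.2) := by
  obtain ⟨s₁, t₁⟩ := h₁
  obtain ⟨s₂, t₂⟩ := h₂
  constructor
  · rintro ⟨x1, x2⟩
    obtain ⟨a, ha⟩ := s₁ x1
    obtain ⟨b, hb⟩ := s₂ x2
    exact ⟨(a, b), ha, hb⟩
  · rintro ⟨x1, x2⟩ ⟨a, b⟩ ⟨hq1, hq2⟩
    obtain ⟨n1, c1⟩ := t₁ x1 a hq1
    obtain ⟨n2, c2⟩ := t₂ x2 b hq2
    constructor
    · rintro ⟨u1, u2⟩ hne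
      rw [Set.prod_nonempty_iff] at hne ⊢
      exact ⟨n1 u1 hne.1, n2 u2 hne.2⟩
    · rintro ⟨u1, u2⟩ hne ⟨y1, y2⟩ ⟨hy1, hy2⟩ ⟨z1, z2⟩ ⟨hz1, hz2⟩
      rw [Set.prod_nonempty_iff] at hne
      exact ⟨c1 u1 hne.1 y1 hy1 z1 hz1, c2 u2 hne.2 y2 hy2 z2 hz2⟩
end
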